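/- arXiv:2105.07304 — 5 statements merged into one kernel-verified Lean document; each statement's English description precedes it below -/
import Mathlib

section
/- Let H be an N×N Hermitian complex matrix, t ∈ ℝ and ε ≥ 0. Let U be a unitary map from ℂ^N ⊗ ℂ^M onto ℂ^{N'} ⊗ ℂ^{M'} (with N·M = N'·M'), let e_0 be a distinguished standard basis vector of ℂ^M, let {e_μ} be the standard basis of ℂ^{M'}, and suppose U (H ⊗ |0⟩⟨0|) U† = Σ_μ H'_μ ⊗ |μ⟩⟨μ|, where each H'_μ is an N'×N' Hermitian matrix and |0⟩⟨0|, |μ⟩⟨μ| denote the rank-one projectors onto e_0 and e_μ. Let I'_μ ⊆ ℂ^{N'} be subspaces such that U(ψ ⊗ e_0) ∈ ⊕_μ (I'_μ ⊗ ℂ e_μ) for every ψ ∈ ℂ^N, and let U_μ(t) be N'×N' matrices satisfying ‖(U_μ(t) − exp(−i t H'_μ)) φ‖ ≤ ε ‖φ‖ for all φ ∈ I'_μ. Define V(t) = U† (Σ_μ U_μ(t) ⊗ |μ⟩⟨μ|) U. Then for every unit vector ψ ∈ ℂ^N, ‖(exp(−i t H) ψ) ⊗ e_0 − V(t)(ψ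 ⊗ e_0)‖ ≤ ε. -/
open Matrix Kronecker

/-- Euclidean norm of a finitely-indexed complex vector. -/
noncomputable def enorm₂ {ι : Type*} [Fintype ι] (v : ι → ℂ) : ℝ :=
  Real.sqrt (∑ i, ‖v i‖ ^ 2)

/-- Tensor (Kronecker) product of two vectors. -/
def vecKron {ι κ : Type*} (v : ι → ℂ) (w : κ → ℂ) : ι × κ → ℂ :=
  fun p => v p.1 * w p.2

lemma enorm_nonneg' {ι : Type*} [Fintype ι] (v : ι → ℂ) : 0 ≤ enorm₂ v := Real.sqrt_nonneg _

lemma enorm_sq {ι : Type*} [Fintype ι] (v : ι → ℂ) : enorm₂ v ^ 2 = ∑ i, ‖v i‖ ^ 2 :=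
  Real.sq_sqrt (Finset.sum_nonneg fun _ _ => sq_nonneg _)

lemma enorm₂_neg {ι : Type*} [Fintype ι] (v : ι → ℂ) : enorm₂ (-v) = enorm₂ v := by
  unfold enorm₂; simp

lemma sum_norm_sq_eq_re {ι : Type*} [Fintype ι] (v : ι → ℂ) :
    ∑ i, ‖v i‖ ^ 2 = (star v ⬝ᵥ v).re := by
  simp only [dotProduct, Pi.star_apply, Complex.re_sum]
  refine Finset.sum_congr rfl fun i _ => ?_
  rw [RCLike.star_def, Complex.conj_mul', ← Complex.ofReal_pow, Complex.ofReal_re]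

lemma enorm_mulVec_unitary {n m : Type*} [Fintype n] [Fintype m] [DecidableEq m] (U : Matrix n m ℂ)
    (hU : Uᴴ * U = 1) (v : m → ℂ) : enorm₂ (U.mulVec v) = enorm₂ v := by
  unfold enorm₂
  congr 1
  rw [sum_norm_sq_eq_re, sum_norm_sq_eq_re, Matrix.star_mulVec, dotProduct_mulVec,
    Matrix.vecMul_vecMul, hU, Matrix.vecMul_one]

lemma blockDiagonal_mulVec' {n m : ℕ} (E : Fin m → Matrix (Fin n) (Fin n) ℂ)
    (y : Fin n × Fin m → ℂ) (i : Fin n) (α : Fin m) :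
    (blockDiagonal E).mulVec y (i, α) = (E α).mulVec (fun j => y (j, α)) i := by
  simp only [Matrix.mulVec, dotProduct, Fintype.sum_prod_type,
    Matrix.blockDiagonal_apply, ite_mul, zero_mul]
  simp [Finset.sum_ite_eq]

lemma pi_exp_apply {n m : ℕ} (G : Fin m → Matrix (Fin n) (Fin n) ℂ) :
    NormedSpace.exp G = fun μ => NormedSpace.exp (G μ) := by
  funext μ
  letI : SeminormedRing (Matrix (Fin n) (Fin n) ℂ) := Matrix.linftyOpSemiNormedRing
  letI : NormedRing (Matrix (Fin n) (Fin n) ℂ) := Matrix.linftyOpNormedRing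
  letI : NormedAlgebra ℂ (Matrix (Fin n) (Fin n) ℂ) := Matrix.linftyOpNormedAlgebra
  letI : NormedAlgebra ℚ (Matrix (Fin n) (Fin n) ℂ) := Matrix.linftyOpNormedAlgebra
  exact Pi.coe_exp G μ

lemma sum_kron_std {n m : ℕ} (A : Fin m → Matrix (Fin n) (Fin n) ℂ) :
    ∑ μ, A μ ⊗ₖ single μ μ (1:ℂ) = blockDiagonal A := by
  ext ⟨i,α⟩ ⟨j,β⟩
  simp only [Matrix.sum_apply, Matrix.kroneckerMap_apply, Matrix.single,
    Matrix.blockDiagonal_apply, Matrix.of_apply, mul_ite, mul_one, mul_zero]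
  by_cases h : α = β
  · subst h; simp [Finset.sum_ite_eq', and_self]
  · rw [if_neg h]
    apply Finset.sum_eq_zero
    intro x _
    rw [if_neg]
    rintro ⟨rfl, rfl⟩; exact h rfl

lemma exp_conj_unitary {a b : Type*} [Fintype a] [Fintype b] [DecidableEq a] [DecidableEq b]
    (U : Matrix a b ℂ) (hU1 : Uᴴ * U = 1) (hU2 : U * Uᴴ = 1)
    (X : Matrix a a ℂ) :
    Uᴴ * NormedSpace.exp X * U = NormedSpace.exp (Uᴴ * X * U) := by
  letI : SeminormedRing (Matrix a a ℂ) := Matrix.linftyOpSemiNormedRing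
  letI : NormedRing (Matrix a a ℂ) := Matrix.linftyOpNormedRing
  letI : NormedAlgebra ℂ (Matrix a a ℂ) := Matrix.linftyOpNormedAlgebra
  letI : NormedAlgebra ℚ (Matrix a a ℂ) := Matrix.linftyOpNormedAlgebra
  letI : SeminormedRing (Matrix b b ℂ) := Matrix.linftyOpSemiNormedRing
  letI : NormedRing (Matrix b b ℂ) := Matrix.linftyOpNormedRing
  letI : NormedAlgebra ℂ (Matrix b b ℂ) := Matrix.linftyOpNormedAlgebra
  letI : NormedAlgebra ℚ (Matrix b b ℂ) := Matrix.linftyOpNormedAlgebra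
  let f : Matrix a a ℂ →+* Matrix b b ℂ :=
    { toFun := fun X => Uᴴ * X * U
      map_one' := by show Uᴴ * 1 * U = 1; rw [Matrix.mul_one, hU1]
      map_mul' := by
        intro X Y
        show Uᴴ * (X * Y) * U = (Uᴴ * X * U) * (Uᴴ * Y * U)
        simp only [Matrix.mul_assoc]
        rw [← Matrix.mul_assoc U Uᴴ, hU2, Matrix.one_mul]
      map_zero' := by simp
      map_add' := by intro X Y; simp [Matrix.mul_add, Matrix.add_mul] }
  have hf : Continuous f := by
    show Continuous fun X : Matrix a a ℂ => Uᴴ * X * U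
    exact (continuous_const.matrix_mul continuous_id).matrix_mul continuous_const
  exact (NormedSpace.map_exp f hf X)

lemma enorm_vecKron {ι κ : Type*} [Fintype ι] [Fintype κ] (v : ι → ℂ) (w : κ → ℂ) :
    enorm₂ (vecKron v w) = enorm₂ v * enorm₂ w := by
  unfold enorm₂ vecKron
  rw [← Real.sqrt_mul (Finset.sum_nonneg fun _ _ => sq_nonneg _)]
  congr 1
  rw [Finset.sum_mul_sum, Fintype.sum_prod_type]
  refine Finset.sum_congr rfl fun i _ => Finset.sum_congr rfl fun j _ => ?_
  rw [norm_mul, mul_pow]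

lemma enorm_single {m : ℕ} (z : Fin m) : enorm₂ (Pi.single z (1:ℂ)) = 1 := by
  have h : ∑ i, ‖(Pi.single z 1 : Fin m → ℂ) i‖ ^ 2 = 1 := by
    have h2 := Fintype.sum_eq_single (f := fun i => ‖(Pi.single z 1 : Fin m → ℂ) i‖ ^ 2) z
      (fun x hx => by simp [Pi.single_eq_of_ne hx])
    rw [h2]; simp
  unfold enorm₂
  rw [h, Real.sqrt_one]

/-- Correctness of Hamiltonian simulation by block diagonalization. -/
theorem block_diagonalization_simulation
    {N M N' M' : ℕ} (hdim : N * M = N' * M')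
    (H : Matrix (Fin N) (Fin N) ℂ) (hH : H.IsHermitian)
    (t ε : ℝ) (hε : 0 ≤ ε)
    (U : Matrix (Fin N' × Fin M') (Fin N × Fin M) ℂ)
    (hU1 : Uᴴ * U = 1) (hU2 : U * Uᴴ = 1)
    (z : Fin M)
    (H' : Fin M' → Matrix (Fin N') (Fin N') ℂ)
    (hH' : ∀ μ, (H' μ).IsHermitian)
    (hblock : U * (H ⊗ₖ single z z (1 : ℂ)) * Uᴴ
      = ∑ μ, (H' μ) ⊗ₖ single μ μ (1 : ℂ))
    (I' : Fin M' → Submodule ℂ (Fin N' → ℂ))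
    (hsupp : ∀ ψ : Fin N → ℂ, ∀ μ : Fin M',
      (fun i => U.mulVec (vecKron ψ (Pi.single z 1)) (i, μ)) ∈ I' μ)
    (Uu : Fin M' → Matrix (Fin N') (Fin N') ℂ)
    (happrox : ∀ μ : Fin M', ∀ φ ∈ I' μ,
      enorm₂ ((Uu μ - NormedSpace.exp ((-(Complex.I * (t : ℂ))) • H' μ)).mulVec φ)
        ≤ ε * enorm₂ φ)
    (V : Matrix (Fin N × Fin M) (Fin N × Fin M) ℂ)
    (hV : V = Uᴴ * (∑ μ, (Uu μ) ⊗ₖ single μ μ (1 : ℂ)) * U)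
    (ψ : Fin N → ℂ) (hψ : enorm₂ ψ = 1) :
    enorm₂ (vecKron ((NormedSpace.exp ((-(Complex.I * (t : ℂ))) • H)).mulVec ψ)
        (Pi.single z 1)
      - V.mulVec (vecKron ψ (Pi.single z 1))) ≤ ε := by
  classical
  set c : ℂ := -(Complex.I * (t : ℂ)) with hc
  set x : Fin N × Fin M → ℂ := vecKron ψ (Pi.single z 1) with hx
  -- rewrite V as block diagonal conjugated
  have hVBD : V = Uᴴ * blockDiagonal Uu * U := by rw [hV, sum_kron_std]
  -- block identity with scalar
  have hblock' : U * ((c • H) ⊗ₖ single z z (1:ℂ)) * Uᴴ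
      = blockDiagonal (fun μ => c • H' μ) := by
    rw [smul_kronecker, Matrix.mul_smul, Matrix.smul_mul, hblock, sum_kron_std,
      ← Matrix.blockDiagonal_smul]
    rfl
  have cancel : ∀ K : Matrix (Fin N × Fin M) (Fin N × Fin M) ℂ,
      Uᴴ * (U * K * Uᴴ) * U = K := by
    intro K
    calc Uᴴ * (U * K * Uᴴ) * U = (Uᴴ * U) * K * (Uᴴ * U) := by
          simp only [Matrix.mul_assoc]
      _ = K := by rw [hU1, Matrix.one_mul, Matrix.mul_one]
  have hK : (c • H) ⊗ₖ single z z (1:ℂ)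
      = Uᴴ * blockDiagonal (fun μ => c • H' μ) * U := by
    rw [← hblock', cancel]
  -- exponentials
  have hExp : NormedSpace.exp ((c • H) ⊗ₖ single z z (1:ℂ))
      = Uᴴ * blockDiagonal (fun μ => NormedSpace.exp (c • H' μ)) * U := by
    rw [hK, ← exp_conj_unitary U hU1 hU2, Matrix.exp_blockDiagonal, pi_exp_apply]
  have hsingleBD : (c • H) ⊗ₖ single z z (1:ℂ)
      = blockDiagonal (Pi.single z (c • H)) := by
    rw [← sum_kron_std]
    rw [Fintype.sum_eq_single z (fun ν hν => by
      rw [Pi.single_eq_of_ne hν, Matrix.zero_kronecker])]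
    rw [Pi.single_eq_same]
  -- the exact evolution is the conjugated block-diagonal exponential applied to x
  have key1 : vecKron ((NormedSpace.exp (c • H)).mulVec ψ) (Pi.single z 1)
      = (NormedSpace.exp ((c • H) ⊗ₖ single z z (1:ℂ))).mulVec x := by
    rw [hsingleBD, Matrix.exp_blockDiagonal, pi_exp_apply]
    funext p
    obtain ⟨i, α⟩ := p
    rw [blockDiagonal_mulVec']
    by_cases hα : α = z
    · rw [hα]
      have hxv : (fun j => x (j, z)) = ψ := by
        funext j; simp [hx, vecKron]
      rw [hxv, Pi.single_eq_same]
      simp [hx, vecKron, Pi.single_eq_same, hα]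
    · have hxv : (fun j => x (j, α)) = 0 := by
        funext j; simp [hx, vecKron, Pi.single_eq_of_ne hα]
      rw [hxv, Matrix.mulVec_zero]
      simp [vecKron, Pi.single_eq_of_ne hα]
  -- collect the difference
  set E : Fin M' → Matrix (Fin N') (Fin N') ℂ :=
    fun μ => NormedSpace.exp (c • H' μ) - Uu μ with hE
  have hmain : vecKron ((NormedSpace.exp (c • H)).mulVec ψ) (Pi.single z 1)
      - V.mulVec x
      = Uᴴ.mulVec ((blockDiagonal E).mulVec (U.mulVec x)) := by
    rw [key1, hExp, hVBD, ← Matrix.sub_mulVec, ← Matrix.sub_mul, ← Matrix.mul_sub]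
    have : blockDiagonal (fun μ => NormedSpace.exp (c • H' μ)) - blockDiagonal Uu
        = blockDiagonal E := by
      rw [← Matrix.blockDiagonal_sub]; rfl
    rw [this, ← Matrix.mulVec_mulVec, ← Matrix.mulVec_mulVec]
  have hUc : (Uᴴ)ᴴ * Uᴴ = 1 := by rw [conjTranspose_conjTranspose]; exact hU2
  rw [hmain, enorm_mulVec_unitary Uᴴ hUc]
  set y : Fin N' × Fin M' → ℂ := U.mulVec x with hy
  have hynorm : enorm₂ y = 1 := by
    rw [hy, enorm_mulVec_unitary U hU1, hx, enorm_vecKron, hψ, enorm_single, mul_one]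
  -- per-block bound
  have hbound : ∀ α : Fin M',
      enorm₂ ((E α).mulVec (fun j => y (j, α))) ≤ ε * enorm₂ (fun j => y (j, α)) := by
    intro α
    have hmem : (fun j => y (j, α)) ∈ I' α := hsupp ψ α
    have := happrox α _ hmem
    have hneg : E α = -(Uu α - NormedSpace.exp (c • H' α)) := by
      simp only [hE]; rw [neg_sub]
    rw [hneg, Matrix.neg_mulVec, enorm₂_neg]
    exact this
  -- sum the squares
  refine le_of_pow_le_pow_left₀ two_ne_zero hε ?_
  rw [enorm_sq]
  have hsplit : ∑ p, ‖(blockDiagonal E).mulVec y p‖ ^ 2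
      = ∑ α, ∑ i, ‖(E α).mulVec (fun j => y (j, α)) i‖ ^ 2 := by
    rw [Fintype.sum_prod_type_right]
    exact Finset.sum_congr rfl fun α _ => Finset.sum_congr rfl fun i _ => by
      rw [blockDiagonal_mulVec']
  rw [hsplit]
  have step : ∑ α, ∑ i, ‖(E α).mulVec (fun j => y (j, α)) i‖ ^ 2
      ≤ ∑ α : Fin M', (ε * enorm₂ (fun j => y (j, α))) ^ 2 := by
    refine Finset.sum_le_sum fun α _ => ?_
    rw [← enorm_sq]
    exact pow_le_pow_left₀ (enorm_nonneg' _) (hbound α) 2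
  refine step.trans ?_
  have : ∑ α : Fin M', (ε * enorm₂ (fun j => y (j, α))) ^ 2
      = ε ^ 2 * ∑ α, ∑ i, ‖y (i, α)‖ ^ 2 := by
    rw [Finset.mul_sum]
    exact Finset.sum_congr rfl fun α _ => by rw [mul_pow, enorm_sq]
  have hcollect : ∑ α : Fin M', ∑ i : Fin N', ‖y (i, α)‖ ^ 2
      = ∑ p : Fin N' × Fin M', ‖y p‖ ^ 2 :=
    (Fintype.sum_prod_type_right (f := fun p : Fin N' × Fin M' => ‖y p‖ ^ 2)).symm
  rw [this, hcollect, ← enorm_sq, hynorm]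
  simp
end

section
/- Let h_1, …, h_L be positive semidefinite N×N complex matrices, H = Σ_{X=1}^L h_X, and on ℂ^N ⊗ ℂ^{L+1} (with ancilla standard basis e_0, e_1, …, e_L) define the Hermitian matrix H' = Σ_{X=1}^L √(h_X) ⊗ (|X⟩⟨0| + |0⟩⟨X|), where √(h_X) is the positive semidefinite square root of h_X and |X⟩⟨0|, |0⟩⟨X| are the matrix units e_X e_0† and e_0 e_X†. Then for every φ ∈ ℂ^N, (H')² (φ ⊗ e_0) = (H φ) ⊗ e_0. -/
open Matrix Kronecker
open scoped ComplexOrder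

/-- The positive semidefinite square root, as `Matrix.PosSemidef.sqrt` was defined in Mathlib
(Dec 2024); it has since been removed from Mathlib. -/
noncomputable def Matrix.PosSemidef.sqrt {n 𝕜 : Type*} [Fintype n] [DecidableEq n] [RCLike 𝕜]
    {A : Matrix n n 𝕜} (hA : A.PosSemidef) : Matrix n n 𝕜 :=
  hA.1.eigenvectorUnitary.1 * diagonal ((↑) ∘ (√·) ∘ hA.1.eigenvalues) *
    (star hA.1.eigenvectorUnitary : Matrix n n 𝕜)

lemma psd_sqrt_mul_self {n : Type*} [Fintype n] [DecidableEq n] {A : Matrix n n ℂ}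
    (hA : A.PosSemidef) : hA.sqrt * hA.sqrt = A := by
  have hs := hA.1.spectral_theorem
  rw [Unitary.conjStarAlgAut_apply] at hs
  conv_rhs => rw [hs]
  unfold Matrix.PosSemidef.sqrt
  have hU : (star hA.1.eigenvectorUnitary : Matrix n n ℂ) * hA.1.eigenvectorUnitary = 1 :=
    Unitary.coe_star_mul_self _
  rw [show ∀ a b c d e f : Matrix n n ℂ, a * b * c * (d * e * f) = a * (b * (c * d) * e) * f by
    intros; simp only [mul_assoc], hU, mul_one, diagonal_mul_diagonal]
  congr 2
  ext i j
  congr 1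
  funext k
  simp only [Function.comp_apply]
  have h0 := Real.mul_self_sqrt (hA.eigenvalues_nonneg k)
  conv_rhs => rw [← h0]
  exact (Complex.ofReal_mul _ _).symm

lemma kron_mulVec {n m : Type*} [Fintype n] [Fintype m]
    (A : Matrix n n ℂ) (B : Matrix m m ℂ) (v : n → ℂ) (w : m → ℂ) :
    (A ⊗ₖ B).mulVec (vecKron v w) = vecKron (A.mulVec v) (B.mulVec w) := by
  ext ⟨i, j⟩
  simp only [Matrix.mulVec, dotProduct, vecKron, kroneckerMap_apply,
    Fintype.sum_prod_type]
  rw [Finset.sum_mul_sum]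
  simp [Finset.mul_sum, mul_comm, mul_assoc, mul_left_comm]

lemma std_mulVec {m : Type*} [Fintype m] [DecidableEq m] (a b : m) (v : m → ℂ) :
    (single a b (1 : ℂ)).mulVec v = Pi.single a (v b) := by
  ext i
  simp [Matrix.mulVec, dotProduct, Matrix.single_apply, Pi.single_apply, ite_and, eq_comm]

lemma sum_mulVec' {n m ι : Type*} [Fintype n] (s : Finset ι)
    (M : ι → Matrix m n ℂ) (v : n → ℂ) :
    (∑ i ∈ s, M i).mulVec v = ∑ i ∈ s, (M i).mulVec v := by
  ext j
  simp only [Matrix.mulVec, dotProduct, Finset.sum_apply, Matrix.sum_apply, Finset.sum_mul]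
  rw [Finset.sum_comm]

lemma mulVec_sum' {n m ι : Type*} [Fintype n] (s : Finset ι)
    (M : Matrix m n ℂ) (v : ι → n → ℂ) :
    M.mulVec (∑ i ∈ s, v i) = ∑ i ∈ s, M.mulVec (v i) := by
  ext j
  simp only [Matrix.mulVec, dotProduct, Finset.sum_apply, Finset.mul_sum]
  exact Finset.sum_comm

lemma vecKron_zero {ι κ : Type*} (v : ι → ℂ) : vecKron v (0 : κ → ℂ) = 0 := by
  ext p; simp [vecKron]

/-- The gap-amplified Hamiltonian H' squares to H on the ancilla state `e₀`. -/
theorem gap_amplification_square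
    {N L : ℕ}
    (h : Fin L → Matrix (Fin N) (Fin N) ℂ)
    (hpsd : ∀ X, (h X).PosSemidef)
    (H : Matrix (Fin N) (Fin N) ℂ) (hH : H = ∑ X, h X)
    (H' : Matrix (Fin N × Fin (L + 1)) (Fin N × Fin (L + 1)) ℂ)
    (hH' : H' = ∑ X, (hpsd X).sqrt ⊗ₖ
      (single X.succ 0 (1 : ℂ) + single 0 X.succ (1 : ℂ)))
    (φ : Fin N → ℂ) :
    (H' * H').mulVec (vecKron φ (Pi.single 0 1))
      = vecKron (H.mulVec φ) (Pi.single 0 1) := by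
  rw [← Matrix.mulVec_mulVec]
  have step1 : H'.mulVec (vecKron φ (Pi.single 0 1))
      = ∑ X, vecKron ((hpsd X).sqrt.mulVec φ) (Pi.single X.succ 1) := by
    rw [hH', sum_mulVec']
    refine Finset.sum_congr rfl fun X _ => ?_
    rw [kron_mulVec, Matrix.add_mulVec, std_mulVec, std_mulVec]
    simp [Pi.single_apply, Fin.succ_ne_zero]
  rw [step1, mulVec_sum']
  have step2 : ∀ X : Fin L,
      H'.mulVec (vecKron ((hpsd X).sqrt.mulVec φ) (Pi.single X.succ 1))
        = vecKron ((h X).mulVec φ) (Pi.single 0 1) := by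
    intro X
    rw [hH', sum_mulVec']
    have : ∀ Y : Fin L,
        ((hpsd Y).sqrt ⊗ₖ (single Y.succ 0 (1 : ℂ) + single 0 Y.succ (1 : ℂ))).mulVec
          (vecKron ((hpsd X).sqrt.mulVec φ) (Pi.single X.succ 1))
        = if Y = X then vecKron ((h X).mulVec φ) (Pi.single 0 1) else 0 := by
      intro Y
      rw [kron_mulVec, Matrix.add_mulVec, std_mulVec, std_mulVec]
      by_cases hYX : Y = X
      · subst hYX
        simp [Pi.single_apply, (Fin.succ_ne_zero Y).symm, Matrix.mulVec_mulVec,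
          psd_sqrt_mul_self (hpsd Y)]
      · have : (Y.succ : Fin (L+1)) ≠ X.succ := by
          simpa [Fin.succ_inj] using hYX
        simp [Pi.single_apply, (Fin.succ_ne_zero X).symm, this, hYX, vecKron_zero]
    simp only [this]
    simp
  simp only [step2]
  rw [hH, sum_mulVec']
  ext p
  simp [vecKron, Finset.sum_apply, Finset.sum_mul]
end

section
/- Let A be an N×N Hermitian complex matrix, W an N×N unitary matrix, D an N×N Hermitian matrix, T > 0 and ε ≥ 0, and suppose the spectral norm bound ‖W† A W − D‖ ≤ ε/(2T) holds. Then for every t with 0 ≤ t ≤ T and every N×N matrix U_t with ‖exp(−i t D) − U_t‖ ≤ ε/2, one has ‖exp(−i t A) − W U_t W†‖ ≤ ε. -/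
open Matrix

/-- Spectral (ℓ²-operator) norm of a complex matrix. -/
noncomputable def specNorm {n : Type*} [Fintype n] [DecidableEq n]
    (A : Matrix n n ℂ) : ℝ :=
  ‖Matrix.toEuclideanCLM (𝕜 := ℂ) A‖

section Aux

open scoped Matrix.Norms.L2Operator
open NormedSpace

attribute [local instance] Matrix.instCStarRing

variable {N : ℕ}

private lemma aux_norm_one_le : ‖(1 : Matrix (Fin N) (Fin N) ℂ)‖ ≤ 1 := by
  rw [Matrix.cstar_norm_def, _root_.map_one]
  exact ContinuousLinearMap.norm_id_le

private lemma aux_unitary_norm_le {u : Matrix (Fin N) (Fin N) ℂ}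
    (hu : u ∈ unitary (Matrix (Fin N) (Fin N) ℂ)) : ‖u‖ ≤ 1 := by
  have h1 : star u * u = 1 := hu.1
  have h2 : ‖star u * u‖ = ‖u‖ * ‖u‖ := CStarRing.norm_star_mul_self
  rw [h1] at h2
  nlinarith [norm_nonneg u, aux_norm_one_le (N := N)]

private lemma aux_exp_unitary {A : Matrix (Fin N) (Fin N) ℂ} (hA : A.IsHermitian) (s : ℝ) :
    exp ((-(Complex.I * (s : ℂ))) • A) ∈ unitary (Matrix (Fin N) (Fin N) ℂ) := by
  let +nondep : NormedAlgebra ℚ (Matrix (Fin N) (Fin N) ℂ) := .restrictScalars ℚ ℂ _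
  apply exp_mem_unitary_of_mem_skewAdjoint
  rw [skewAdjoint.mem_iff, star_smul, Matrix.star_eq_conjTranspose, hA.eq]
  rw [show star (-(Complex.I * (s : ℂ))) = -(-(Complex.I * (s : ℂ))) by
    simp [Complex.ext_iff]]
  rw [neg_smul, neg_smul]

private lemma aux_exp_norm_le_one {A : Matrix (Fin N) (Fin N) ℂ} (hA : A.IsHermitian) (s : ℝ) :
    ‖exp ((-(Complex.I * (s : ℂ))) • A)‖ ≤ 1 :=
  aux_unitary_norm_le (aux_exp_unitary hA s)

private lemma aux_exp_diff {A B : Matrix (Fin N) (Fin N) ℂ}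
    (hA : A.IsHermitian) (hB : B.IsHermitian) (t : ℝ) :
    ‖exp ((-(Complex.I * (t : ℂ))) • A) - exp ((-(Complex.I * (t : ℂ))) • B)‖
      ≤ |t| * ‖A - B‖ := by
  set c : ℂ := -(Complex.I * (t : ℂ)) with hc
  set x : Matrix (Fin N) (Fin N) ℂ := c • A with hx
  set y : Matrix (Fin N) (Fin N) ℂ := c • B with hy
  have hderiv : ∀ z : ℂ, HasDerivAt (fun z : ℂ => exp (z • x) * exp ((1 - z) • y))
      (exp (z • x) * ((x - y) * exp ((1 - z) • y))) z := by
    intro z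
    have h1 : HasDerivAt (fun z : ℂ => exp (z • x)) (exp (z • x) * x) z :=
      hasDerivAt_exp_smul_const x z
    have h2' : HasDerivAt (fun w : ℂ => exp (w • y)) (exp ((1 - z) • y) * y) (1 - z) :=
      hasDerivAt_exp_smul_const y (1 - z)
    have h3 : HasDerivAt (fun z : ℂ => (1 : ℂ) - z) (-1) z := by
      simpa using (hasDerivAt_id z).const_sub 1
    have h4 := HasDerivAt.scomp (g₁ := fun w : ℂ => exp (w • y))
      (h := fun z : ℂ => 1 - z) z h2' h3
    have h2 : HasDerivAt (fun z : ℂ => exp ((1 - z) • y))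
        (-(exp ((1 - z) • y) * y)) z := by
      have h5 := h4.congr_deriv
        (show (-1 : ℂ) • (exp ((1 - z) • y) * y) = -(exp ((1 - z) • y) * y) by simp)
      exact h5
    have h6 := h1.mul h2
    apply h6.congr_deriv
    have hcomm : y * exp ((1 - z) • y) = exp ((1 - z) • y) * y :=
      (((Commute.refl y).smul_right ((1 : ℂ) - z)).exp_right).eq
    rw [← hcomm]
    noncomm_ring
  have hbound : ∀ z ∈ segment ℝ (0 : ℂ) 1,
      ‖exp (z • x) * ((x - y) * exp ((1 - z) • y))‖ ≤ ‖x - y‖ := by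
    intro z hz
    rw [segment_eq_image] at hz
    obtain ⟨r, hr, hzr⟩ := hz
    have hz1 : z = ((r : ℝ) : ℂ) := by
      rw [← hzr]; simp [Complex.real_smul]
    subst hz1
    have he1 : ((r : ℝ) : ℂ) • x = (-(Complex.I * ((r * t : ℝ) : ℂ))) • A := by
      rw [hx, smul_smul, hc]; push_cast; ring_nf
    have he2 : (1 - ((r : ℝ) : ℂ)) • y = (-(Complex.I * (((1 - r) * t : ℝ) : ℂ))) • B := by
      rw [hy, smul_smul, hc]; push_cast; ring_nf
    calc ‖exp (((r : ℝ) : ℂ) • x) * ((x - y) * exp ((1 - ((r : ℝ) : ℂ)) • y))‖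
        ≤ ‖exp (((r : ℝ) : ℂ) • x)‖ * ‖(x - y) * exp ((1 - ((r : ℝ) : ℂ)) • y)‖ :=
          norm_mul_le _ _
      _ ≤ ‖exp (((r : ℝ) : ℂ) • x)‖ * (‖x - y‖ * ‖exp ((1 - ((r : ℝ) : ℂ)) • y)‖) := by
          gcongr; exact norm_mul_le _ _
      _ ≤ 1 * (‖x - y‖ * 1) := by
          have b1 := he1 ▸ aux_exp_norm_le_one hA (r * t)
          have b2 := he2 ▸ aux_exp_norm_le_one hB ((1 - r) * t)
          gcongr <;> first | exact b1 | exact b2 | positivity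
      _ = ‖x - y‖ := by ring
  have hmvt := (convex_segment (0 : ℂ) 1).norm_image_sub_le_of_norm_hasDerivWithin_le
    (f' := fun z : ℂ => exp (z • x) * ((x - y) * exp ((1 - z) • y)))
    (fun z _ => (hderiv z).hasDerivWithinAt) hbound
    (left_mem_segment ℝ (0 : ℂ) 1) (right_mem_segment ℝ (0 : ℂ) 1)
  simp only [one_smul, sub_self, zero_smul, exp_zero, mul_one, one_mul, sub_zero,
    norm_one] at hmvt
  have hxy : ‖x - y‖ = |t| * ‖A - B‖ := by
    rw [hx, hy, ← smul_sub, norm_smul, hc]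
    congr 1
    simp
  calc ‖exp (c • A) - exp (c • B)‖ = ‖exp x - exp y‖ := by rw [hx, hy]
    _ ≤ ‖x - y‖ * 1 := by simpa using hmvt
    _ = |t| * ‖A - B‖ := by rw [hxy]; ring

end Aux

/-- Correctness of Hamiltonian simulation by (Lie-algebra) diagonalization. -/
theorem simulation_by_diagonalization
    {N : ℕ} (A W D : Matrix (Fin N) (Fin N) ℂ)
    (hA : A.IsHermitian) (hW : W ∈ Matrix.unitaryGroup (Fin N) ℂ)
    (hD : D.IsHermitian)
    (T ε : ℝ) (hT : 0 < T) (hε : 0 ≤ ε)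
    (hdiag : specNorm (Wᴴ * A * W - D) ≤ ε / (2 * T))
    (t : ℝ) (ht0 : 0 ≤ t) (htT : t ≤ T)
    (Ut : Matrix (Fin N) (Fin N) ℂ)
    (hUt : specNorm (NormedSpace.exp ((-(Complex.I * (t : ℂ))) • D) - Ut) ≤ ε / 2) :
    specNorm (NormedSpace.exp ((-(Complex.I * (t : ℂ))) • A) - W * Ut * Wᴴ) ≤ ε := by
  classical
  letI := Matrix.instL2OpMetricSpace (m := Fin N) (n := Fin N) (𝕜 := ℂ)
  letI := Matrix.instL2OpNormedAddCommGroup (m := Fin N) (n := Fin N) (𝕜 := ℂ)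
  letI := Matrix.instL2OpNormedRing (n := Fin N) (𝕜 := ℂ)
  letI := Matrix.instL2OpNormedSpace (m := Fin N) (n := Fin N) (𝕜 := ℂ)
  letI := Matrix.instL2OpNormedAlgebra (n := Fin N) (𝕜 := ℂ)
  letI := Matrix.instCStarRing (n := Fin N) (𝕜 := ℂ)
  set c : ℂ := -(Complex.I * (t : ℂ)) with hc
  set B : Matrix (Fin N) (Fin N) ℂ := Wᴴ * A * W with hB
  have hWW' : W * Wᴴ = 1 := by
    have := (Matrix.mem_unitaryGroup_iff).mp hW
    simpa [Matrix.star_eq_conjTranspose] using this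
  have hW'W : Wᴴ * W = 1 := by
    have := (Matrix.mem_unitaryGroup_iff').mp hW
    simpa [Matrix.star_eq_conjTranspose] using this
  have hBH : B.IsHermitian := Matrix.isHermitian_conjTranspose_mul_mul W hA
  have hconj : NormedSpace.exp (c • A) = W * NormedSpace.exp (c • B) * Wᴴ := by
    have hu : c • A = W * (c • B) * Wᴴ := by
      rw [hB, Matrix.mul_smul, Matrix.smul_mul]
      congr 1
      rw [← Matrix.mul_assoc, ← Matrix.mul_assoc, hWW', Matrix.one_mul,
        Matrix.mul_assoc, hWW', Matrix.mul_one]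
    let u : (Matrix (Fin N) (Fin N) ℂ)ˣ := ⟨W, Wᴴ, hWW', hW'W⟩
    let +nondep : NormedAlgebra ℚ (Matrix (Fin N) (Fin N) ℂ) := .restrictScalars ℚ ℂ _
    have h := NormedSpace.exp_units_conj u (c • B)
    rw [hu]
    exact h
  show ‖NormedSpace.exp (c • A) - W * Ut * Wᴴ‖ ≤ ε
  have heq : NormedSpace.exp (c • A) - W * Ut * Wᴴ
      = W * (NormedSpace.exp (c • B) - Ut) * Wᴴ := by
    rw [hconj, Matrix.mul_sub, Matrix.sub_mul]
  rw [heq]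
  have hWn : ‖W‖ ≤ 1 := aux_unitary_norm_le hW
  have hWn' : ‖Wᴴ‖ ≤ 1 := by
    rw [show Wᴴ = star W from rfl]
    exact aux_unitary_norm_le (Unitary.star_mem hW)
  have hmid : ‖NormedSpace.exp (c • B) - Ut‖ ≤ ε := by
    have h1 : ‖NormedSpace.exp (c • B) - NormedSpace.exp (c • D)‖ ≤ |t| * ‖B - D‖ :=
      aux_exp_diff hBH hD t
    have h2 : ‖NormedSpace.exp (c • D) - Ut‖ ≤ ε / 2 := hUt
    have h3 : ‖B - D‖ ≤ ε / (2 * T) := hdiag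
    have h4 : |t| = t := abs_of_nonneg ht0
    have h5 : ‖NormedSpace.exp (c • B) - Ut‖
        ≤ ‖NormedSpace.exp (c • B) - NormedSpace.exp (c • D)‖
          + ‖NormedSpace.exp (c • D) - Ut‖ := by
      simpa [sub_add_sub_cancel] using norm_add_le
        (NormedSpace.exp (c • B) - NormedSpace.exp (c • D))
        (NormedSpace.exp (c • D) - Ut)
    have h6 : t * ‖B - D‖ ≤ t * (ε / (2 * T)) := mul_le_mul_of_nonneg_left h3 ht0
    have h7 : t * (ε / (2 * T)) ≤ T * (ε / (2 * T)) := by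
      have hnn : 0 ≤ ε / (2 * T) := div_nonneg hε (by linarith)
      exact mul_le_mul_of_nonneg_right htT hnn
    have h8 : T * (ε / (2 * T)) = ε / 2 := by
      field_simp
    rw [h4] at h1
    linarith
  calc ‖W * (NormedSpace.exp (c • B) - Ut) * Wᴴ‖
      ≤ ‖W * (NormedSpace.exp (c • B) - Ut)‖ * ‖Wᴴ‖ := norm_mul_le _ _
    _ ≤ ‖W‖ * ‖NormedSpace.exp (c • B) - Ut‖ * ‖Wᴴ‖ := by
        gcongr
        exact norm_mul_le _ _
    _ ≤ 1 * ε * 1 := by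
        have hnn : (0:ℝ) ≤ ‖NormedSpace.exp (c • B) - Ut‖ := norm_nonneg _
        gcongr
    _ = ε := by ring
end

section
/- Identify the n-fold tensor power (ℂ^d)^{⊗n} with the space V of functions (Fin n → Fin d) → ℂ. For a permutation σ of Fin n, let P_σ : V → V be the linear map (P_σ f)(x) = f(x ∘ σ). For a d×d complex matrix A, let A^{⊗n} denote the linear map on V given by the matrix with entries (A^{⊗n})_{x,y} = ∏_i A_{x(i), y(i)}. Then a linear endomorphism T of V commutes with P_σ for every permutation σ of Fin n if and only if T lies in the ℂ-linear span of { A^{⊗n} : A a d×d complex matrix }. -/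
/-- The n-fold tensor power (ℂ^d)^{⊗n}, as functions (Fin n → Fin d) → ℂ. -/
abbrev TensorPowSpace (n d : ℕ) := (Fin n → Fin d) → ℂ

/-- The permutation action P_σ on tensor factors: (P_σ f)(x) = f(x ∘ σ). -/
def permAction (n d : ℕ) (σ : Equiv.Perm (Fin n)) :
    TensorPowSpace n d →ₗ[ℂ] TensorPowSpace n d where
  toFun f := fun x => f (x ∘ σ)
  map_add' _ _ := rfl
  map_smul' _ _ := rfl

/-- The n-fold tensor power A^{⊗n} of a single-site operator A. -/
noncomputable def tensorPow (n d : ℕ) (A : Matrix (Fin d) (Fin d) ℂ) :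
    TensorPowSpace n d →ₗ[ℂ] TensorPowSpace n d :=
  Matrix.toLin' (Matrix.of fun x y => ∏ i, A (x i) (y i))

open Finset in
lemma SW_incl_excl (n : ℕ) (R : Finset (Fin n)) :
    ∑ S : Finset (Fin n), (-1 : ℂ)^(n - S.card) * (if R ⊆ S then 1 else 0)
      = if R = Finset.univ then 1 else 0 := by
  simp only [mul_ite, mul_one, mul_zero]
  rw [Finset.sum_ite, Finset.sum_const_zero, add_zero]
  rw [Finset.sum_nbij' (i := fun S => S \ R) (j := fun T => R ∪ T)
      (t := Rᶜ.powerset) (g := fun T => (-1:ℂ)^(Rᶜ.card - T.card))]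
  · have : ∑ T ∈ Rᶜ.powerset, ((-1:ℂ))^(Rᶜ.card - T.card)
        = (-1:ℂ)^(Rᶜ.card) * ∑ T ∈ Rᶜ.powerset, ((-1:ℂ))^(T.card) := by
      rw [Finset.mul_sum]
      refine Finset.sum_congr rfl fun T hT => ?_
      have hle : T.card ≤ Rᶜ.card := Finset.card_le_card (Finset.mem_powerset.mp hT)
      have h1 : ((-1:ℂ))^(T.card) * ((-1:ℂ))^(T.card) = 1 := by
        rw [← mul_pow]; simp
      calc ((-1:ℂ))^(Rᶜ.card - T.card)
          = ((-1:ℂ))^(Rᶜ.card - T.card) * (((-1:ℂ))^(T.card) * ((-1:ℂ))^(T.card)) := by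
            rw [h1, mul_one]
        _ = ((-1:ℂ))^(Rᶜ.card - T.card + T.card) * ((-1:ℂ))^(T.card) := by rw [pow_add, mul_assoc]
        _ = (-1:ℂ)^(Rᶜ.card) * ((-1:ℂ))^(T.card) := by rw [Nat.sub_add_cancel hle]
    rw [this]
    have hz : ∑ T ∈ Rᶜ.powerset, ((-1:ℂ))^(T.card) = if Rᶜ = ∅ then 1 else 0 := by
      have := @Finset.sum_powerset_neg_one_pow_card (Fin n) _ Rᶜ
      have := congrArg (fun z : ℤ => (z : ℂ)) this
      push_cast at this
      simpa using this
    rw [hz]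
    by_cases h : R = Finset.univ
    · simp [h]
    · have : Rᶜ ≠ ∅ := by
        simp only [ne_eq, Finset.compl_eq_empty_iff]
        exact h
      simp [h, this]
  · intro S hS
    simp only [Finset.mem_filter] at hS
    simp [Finset.mem_powerset, Finset.subset_compl_comm]
    intro a ha; simp [Finset.mem_sdiff] at ha ⊢; tauto
  · intro T hT
    simp only [Finset.mem_powerset] at hT
    simp only [Finset.mem_filter, Finset.mem_univ, true_and]
    exact Finset.subset_union_left
  · intro S hS
    simp only [Finset.mem_filter, Finset.mem_univ, true_and] at hS
    exact Finset.union_sdiff_of_subset hS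
  · intro T hT
    simp only [Finset.mem_powerset] at hT
    exact Finset.union_sdiff_cancel_left (Finset.disjoint_left.mpr
      (fun a haR haT => by
        have := hT haT
        simp only [Finset.mem_compl] at this
        exact this haR))
  · intro S hS
    simp only [Finset.mem_filter, Finset.mem_univ, true_and] at hS
    congr 1
    have h1 : R.card ≤ S.card := Finset.card_le_card hS
    have h2 : S.card ≤ n := by simpa using Finset.card_le_univ S
    rw [Finset.card_sdiff_of_subset hS, Finset.card_compl]
    simp only [Fintype.card_fin]
    omega

open Finset in
lemma SW_polarization (n d : ℕ) (w : Fin n → Fin d × Fin d) (x y : Fin n → Fin d) :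
    ∑ S : Finset (Fin n), (-1:ℂ)^(n - S.card)
        * ∏ i, (∑ j ∈ S, if w j = (x i, y i) then (1:ℂ) else 0)
      = ∑ σ : Equiv.Perm (Fin n), ∏ i, (if w (σ i) = (x i, y i) then (1:ℂ) else 0) := by
  have key : ∀ S : Finset (Fin n),
      ∏ i, (∑ j ∈ S, if w j = (x i, y i) then (1:ℂ) else 0)
        = ∑ p : Fin n → Fin n, if (∀ i, p i ∈ S) then
            ∏ i, (if w (p i) = (x i, y i) then (1:ℂ) else 0) else 0 := by
    intro S
    rw [Finset.prod_univ_sum (fun _ => S) (fun i j => if w j = (x i, y i) then (1:ℂ) else 0)]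
    have hset : Fintype.piFinset (fun _ : Fin n => S)
        = Finset.univ.filter (fun p : Fin n → Fin n => ∀ i, p i ∈ S) := by
      ext p; simp [Fintype.mem_piFinset]
    rw [hset, Finset.sum_filter]
  simp only [key, Finset.mul_sum, mul_ite, mul_zero]
  rw [Finset.sum_comm]
  have step : ∀ p : Fin n → Fin n,
      (∑ S : Finset (Fin n), if (∀ i, p i ∈ S) then
          (-1:ℂ)^(n - S.card) * ∏ i, (if w (p i) = (x i, y i) then (1:ℂ) else 0) else 0)
        = (if Function.Bijective p then
            ∏ i, (if w (p i) = (x i, y i) then (1:ℂ) else 0) else 0) := by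
    intro p
    have h1 : ∀ S : Finset (Fin n), (∀ i, p i ∈ S) ↔ Finset.image p Finset.univ ⊆ S := by
      intro S; rw [Finset.image_subset_iff]; simp
    calc (∑ S : Finset (Fin n), if (∀ i, p i ∈ S) then
          (-1:ℂ)^(n - S.card) * ∏ i, (if w (p i) = (x i, y i) then (1:ℂ) else 0) else 0)
        = (∑ S : Finset (Fin n), (-1:ℂ)^(n - S.card)
            * (if Finset.image p Finset.univ ⊆ S then 1 else 0))
            * ∏ i, (if w (p i) = (x i, y i) then (1:ℂ) else 0) := by
          rw [Finset.sum_mul]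
          refine Finset.sum_congr rfl fun S _ => ?_
          by_cases h : Finset.image p Finset.univ ⊆ S
          · rw [if_pos ((h1 S).mpr h), if_pos h]; ring
          · rw [if_neg (fun hc => h ((h1 S).mp hc)), if_neg h]; ring
      _ = (if Finset.image p Finset.univ = Finset.univ then 1 else 0)
            * ∏ i, (if w (p i) = (x i, y i) then (1:ℂ) else 0) := by
          rw [SW_incl_excl]
      _ = _ := by
          have : Finset.image p Finset.univ = Finset.univ ↔ Function.Bijective p := by
            constructor
            · intro h
              have hsurj : Function.Surjective p := by
                intro b
                have : b ∈ Finset.image p Finset.univ := by rw [h]; exact Finset.mem_univ b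
                simpa using Finset.mem_image.mp this
              exact Finite.surjective_iff_bijective.mp hsurj
            · intro h
              apply Finset.eq_univ_of_forall
              intro b
              obtain ⟨a, ha⟩ := h.2 b
              exact Finset.mem_image.mpr ⟨a, Finset.mem_univ a, ha⟩
          by_cases h : Function.Bijective p
          · rw [if_pos (this.mpr h), if_pos h, one_mul]
          · rw [if_neg (fun hc => h (this.mp hc)), if_neg h, zero_mul]
  simp only [step]
  rw [← Finset.sum_filter]
  refine Finset.sum_bij'
    (i := fun p hp => Equiv.ofBijective p (by simpa using hp))
    (j := fun σ _ => ⇑σ) ?_ ?_ ?_ ?_ ?_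
  · intro a ha; exact Finset.mem_univ _
  · intro σ _; exact Finset.mem_filter.mpr ⟨Finset.mem_univ _, Equiv.bijective σ⟩
  · intro a ha; rfl
  · intro σ _; ext i; rfl
  · intro a ha; rfl

open Finset in
lemma SW_invariant_mem_span (n d : ℕ)
    (M : Matrix (Fin n → Fin d) (Fin n → Fin d) ℂ)
    (hM : ∀ (σ : Equiv.Perm (Fin n)) (x y : Fin n → Fin d), M (x ∘ σ) (y ∘ σ) = M x y) :
    M ∈ Submodule.span ℂ {P : Matrix (Fin n → Fin d) (Fin n → Fin d) ℂ |
        ∃ A : Matrix (Fin d) (Fin d) ℂ, P = Matrix.of fun x y => ∏ i, A (x i) (y i)} := by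
  set AS : (Fin n → Fin d × Fin d) → Finset (Fin n) → Matrix (Fin d) (Fin d) ℂ :=
    fun w S => Matrix.of fun a b => ∑ j ∈ S, if w j = (a, b) then (1:ℂ) else 0 with hAS
  set N : Matrix (Fin n → Fin d) (Fin n → Fin d) ℂ :=
    ((n.factorial : ℂ))⁻¹ • ∑ w : Fin n → Fin d × Fin d,
      (M (fun i => (w i).1) (fun i => (w i).2)) •
        ∑ S : Finset (Fin n), ((-1:ℂ)^(n - S.card)) •
          (Matrix.of fun x y => ∏ i, (AS w S) (x i) (y i)) with hN
  have hmem : N ∈ Submodule.span ℂ {P : Matrix (Fin n → Fin d) (Fin n → Fin d) ℂ |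
      ∃ A : Matrix (Fin d) (Fin d) ℂ, P = Matrix.of fun x y => ∏ i, A (x i) (y i)} := by
    apply Submodule.smul_mem
    apply Submodule.sum_mem
    intro w _
    apply Submodule.smul_mem
    apply Submodule.sum_mem
    intro S _
    apply Submodule.smul_mem
    exact Submodule.subset_span ⟨AS w S, rfl⟩
  have hEq : M = N := by
    ext x y
    rw [hN]
    simp only [Matrix.smul_apply, Matrix.sum_apply, Matrix.of_apply, smul_eq_mul]
    have hpol : ∀ w : Fin n → Fin d × Fin d,
        (∑ S : Finset (Fin n), (-1:ℂ)^(n - S.card) * ∏ i, (AS w S) (x i) (y i))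
          = ∑ σ : Equiv.Perm (Fin n), ∏ i, (if w (σ i) = (x i, y i) then (1:ℂ) else 0) := by
      intro w
      rw [← SW_polarization n d w x y]
      rfl
    simp only [hpol, Finset.mul_sum]
    rw [Finset.sum_comm]
    have hinner : ∀ σ : Equiv.Perm (Fin n),
        (∑ w : Fin n → Fin d × Fin d, M (fun i => (w i).1) (fun i => (w i).2)
            * ∏ i, (if w (σ i) = (x i, y i) then (1:ℂ) else 0)) = M x y := by
      intro σ
      have hb : ∀ w : Fin n → Fin d × Fin d,
          (∏ i, (if w (σ i) = (x i, y i) then (1:ℂ) else 0))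
            = if w = (fun j => (x (σ.symm j), y (σ.symm j))) then 1 else 0 := by
        intro w
        rw [Finset.prod_boole]
        congr 1
        simp only [eq_iff_iff]
        constructor
        · intro h; funext j
          have := h (σ.symm j) (Finset.mem_univ _)
          simpa using this
        · intro h i _
          rw [h]; simp
      simp only [hb, mul_ite, mul_one, mul_zero]
      rw [Finset.sum_ite_eq' Finset.univ]
      simp only [Finset.mem_univ, if_true]
      exact hM σ.symm x y
    simp only [← Finset.mul_sum, hinner]
    rw [Finset.sum_const]
    simp only [Finset.card_univ, Fintype.card_perm, Fintype.card_fin, nsmul_eq_mul]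
    have hfac : (n.factorial : ℂ) ≠ 0 := by exact_mod_cast Nat.factorial_ne_zero n
    field_simp
  rw [hEq]; exact hmem

open Finset in
lemma SW_tensorPow_comm (n d : ℕ) (A : Matrix (Fin d) (Fin d) ℂ) (σ : Equiv.Perm (Fin n)) :
    tensorPow n d A ∘ₗ permAction n d σ = permAction n d σ ∘ₗ tensorPow n d A := by
  apply LinearMap.ext; intro f
  funext x
  show (Matrix.toLin' (Matrix.of fun x y => ∏ i, A (x i) (y i))) (fun z => f (z ∘ σ)) x
      = (Matrix.toLin' (Matrix.of fun x y => ∏ i, A (x i) (y i))) f (x ∘ σ)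
  simp only [Matrix.toLin'_apply, Matrix.mulVec, dotProduct, Matrix.of_apply]
  refine Fintype.sum_equiv (Equiv.arrowCongr σ.symm (Equiv.refl (Fin d)))
    _ _ (fun y => ?_)
  have h1 : (Equiv.arrowCongr σ.symm (Equiv.refl (Fin d))) y = y ∘ σ := by
    funext i; rfl
  rw [h1]
  have h2 : ∀ i : Fin n, (y ∘ σ) i = y (σ i) := fun i => rfl
  have h3 : ∏ i, A ((x ∘ σ) i) ((y ∘ σ) i) = ∏ i, A (x i) (y i) :=
    Equiv.prod_comp σ (fun i => A (x i) (y i))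
  rw [h3]

/-- Schur–Weyl duality (commutant form): an endomorphism of (ℂ^d)^{⊗n} commutes
with all permutations of tensor factors iff it lies in the span of the A^{⊗n}. -/
theorem schur_weyl_commutant
    (n d : ℕ) (T : TensorPowSpace n d →ₗ[ℂ] TensorPowSpace n d) :
    (∀ σ : Equiv.Perm (Fin n),
        T ∘ₗ permAction n d σ = permAction n d σ ∘ₗ T)
    ↔ T ∈ Submodule.span ℂ
        {S | ∃ A : Matrix (Fin d) (Fin d) ℂ, S = tensorPow n d A} := by
  constructor
  · intro hcomm
    set M := LinearMap.toMatrix' T with hMdef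
    have hQ : ∀ σ : Equiv.Perm (Fin n), LinearMap.toMatrix' (permAction n d σ) =
        Matrix.of (fun a b : Fin n → Fin d => if a ∘ σ = b then (1:ℂ) else 0) := by
      intro σ
      ext a b
      rw [LinearMap.toMatrix'_apply]
      show (Pi.single b (1:ℂ) : (Fin n → Fin d) → ℂ) (a ∘ σ) = (if a ∘ σ = b then (1:ℂ) else 0)
      rw [Pi.single_apply]
    have hinv : ∀ (σ : Equiv.Perm (Fin n)) (x y : Fin n → Fin d),
        M (x ∘ σ) (y ∘ σ) = M x y := by
      intro σ x y
      have h := congrArg LinearMap.toMatrix' (hcomm σ)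
      rw [LinearMap.toMatrix'_comp, LinearMap.toMatrix'_comp, hQ σ] at h
      have h2 : (M * Matrix.of (fun a b : Fin n → Fin d => if a ∘ σ = b then (1:ℂ) else 0)) x (y ∘ σ)
          = (Matrix.of (fun a b : Fin n → Fin d => if a ∘ σ = b then (1:ℂ) else 0) * M) x (y ∘ σ) := by
        rw [h]
      have hcond : ∀ z : Fin n → Fin d, (z ∘ σ = y ∘ σ) ↔ z = y := by
        intro z
        constructor
        · intro hz
          funext j
          have := congrFun hz (σ.symm j)
          simpa using this
        · intro hz; rw [hz]
      rw [Matrix.mul_apply, Matrix.mul_apply] at h2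
      simp only [Matrix.of_apply] at h2
      have hl : ∑ z, M x z * (if z ∘ σ = y ∘ σ then (1:ℂ) else 0) = M x y := by
        simp only [hcond, mul_ite, mul_one, mul_zero]
        rw [Finset.sum_ite_eq' Finset.univ]
        simp
      have hr : ∑ z, (if x ∘ σ = z then (1:ℂ) else 0) * M z (y ∘ σ) = M (x ∘ σ) (y ∘ σ) := by
        simp only [ite_mul, one_mul, zero_mul]
        rw [Finset.sum_ite_eq Finset.univ]
        simp
      rw [hl, hr] at h2
      exact h2.symm
    have hspan := SW_invariant_mem_span n d M hinv
    have himg := Submodule.apply_mem_span_image_of_mem_span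
      (Matrix.toLin' : Matrix (Fin n → Fin d) (Fin n → Fin d) ℂ ≃ₗ[ℂ]
        ((Fin n → Fin d) → ℂ) →ₗ[ℂ] ((Fin n → Fin d) → ℂ)).toLinearMap hspan
    have hT : Matrix.toLin' M = T := Matrix.toLin'_toMatrix' T
    simp only [LinearEquiv.coe_coe] at himg
    rw [hT] at himg
    refine Submodule.span_mono ?_ himg
    rintro _ ⟨P, ⟨A, rfl⟩, rfl⟩
    exact ⟨A, rfl⟩
  · intro hT σ
    induction hT using Submodule.span_induction with
    | mem S hS =>
      obtain ⟨A, rfl⟩ := hS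
      exact SW_tensorPow_comm n d A σ
    | zero => simp
    | add a b _ _ ha hb =>
      rw [LinearMap.add_comp, LinearMap.comp_add, ha, hb]
    | smul c a _ ha =>
      rw [LinearMap.smul_comp, LinearMap.comp_smul, ha]
end

section
/- Let E ∈ ℝ, t ≥ 0, δ ≥ 0 and η ∈ [0,1]. Let (E'_k)_{k ∈ K} be a finite family of real numbers and (α_k)_{k ∈ K} complex amplitudes with Σ_k |α_k|² = 1 and Σ_{k : |E'_k − E| ≤ δ} |α_k|² ≥ η. Then ( Σ_k |α_k|² · |exp(−i t E) − exp(−i t E'_k)|² )^{1/2} ≤ t δ + 2 √(1 − η). -/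
lemma exp_I_sub_one_norm (θ : ℝ) :
    ‖Complex.exp ((θ : ℂ) * Complex.I) - 1‖ ≤ |θ| := by
  have hsq : ‖Complex.exp ((θ : ℂ) * Complex.I) - 1‖ ^ 2 = 2 - 2 * Real.cos θ := by
    rw [Complex.exp_mul_I]
    have h : (Complex.cos θ + Complex.sin θ * Complex.I - 1)
        = Complex.ofReal (Real.cos θ - 1) + Complex.ofReal (Real.sin θ) * Complex.I := by
      push_cast; ring
    rw [h, Complex.sq_norm, Complex.normSq_add_mul_I]
    nlinarith [Real.sin_sq_add_cos_sq θ]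
  have hcos := Real.one_sub_sq_div_two_le_cos (x := θ)
  have h2 : ‖Complex.exp ((θ : ℂ) * Complex.I) - 1‖ ^ 2 ≤ θ ^ 2 := by
    rw [hsq]; linarith
  have := Real.sqrt_le_sqrt h2
  rwa [Real.sqrt_sq (norm_nonneg _), Real.sqrt_sq_eq_abs] at this

lemma exp_I_dist (a b : ℝ) :
    ‖Complex.exp ((a : ℂ) * Complex.I) - Complex.exp ((b : ℂ) * Complex.I)‖ ≤ |a - b| := by
  have hfact : Complex.exp ((a : ℂ) * Complex.I) - Complex.exp ((b : ℂ) * Complex.I)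
      = Complex.exp ((b : ℂ) * Complex.I) *
        (Complex.exp (((a - b : ℝ) : ℂ) * Complex.I) - 1) := by
    rw [mul_sub, mul_one, ← Complex.exp_add]
    push_cast
    ring_nf
  rw [hfact, norm_mul, Complex.norm_exp_ofReal_mul_I, one_mul]
  exact exp_I_sub_one_norm (a - b)

lemma sqrt_add_le' (a b : ℝ) (ha : 0 ≤ a) (hb : 0 ≤ b) :
    Real.sqrt (a + b) ≤ Real.sqrt a + Real.sqrt b := by
  have h : a + b ≤ (Real.sqrt a + Real.sqrt b) ^ 2 := by
    have := Real.sq_sqrt ha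
    have := Real.sq_sqrt hb
    nlinarith [Real.sqrt_nonneg a, Real.sqrt_nonneg b]
  calc Real.sqrt (a + b) ≤ Real.sqrt ((Real.sqrt a + Real.sqrt b) ^ 2) := Real.sqrt_le_sqrt h
    _ = Real.sqrt a + Real.sqrt b := Real.sqrt_sq (by positivity)

/-- Error estimate for Hamiltonian simulation from precise energy measurements:
applying phases exp(−itE'_k) instead of exp(−itE) incurs Euclidean error at most
tδ + 2√(1−η) when weight at least η of the amplitudes lies within δ of E. -/
theorem energy_measurement_simulation_error
    {K : Type*} [Fintype K] (E t δ η : ℝ)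
    (ht : 0 ≤ t) (hδ : 0 ≤ δ) (hη0 : 0 ≤ η) (hη1 : η ≤ 1)
    (E' : K → ℝ) (α : K → ℂ)
    (hnorm : ∑ k, ‖α k‖ ^ 2 = 1)
    (hconf : η ≤ ∑ k ∈ Finset.univ.filter (fun k => |E' k - E| ≤ δ), ‖α k‖ ^ 2) :
    Real.sqrt (∑ k, ‖α k‖ ^ 2 *
        ‖Complex.exp (-(Complex.I * t * E)) - Complex.exp (-(Complex.I * t * (E' k)))‖ ^ 2)
      ≤ t * δ + 2 * Real.sqrt (1 - η) := by
  classical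
  set G := Finset.univ.filter (fun k => |E' k - E| ≤ δ) with hG
  set d : K → ℝ := fun k =>
    ‖Complex.exp (-(Complex.I * t * E)) - Complex.exp (-(Complex.I * t * (E' k)))‖ with hd
  have hdist : ∀ k, d k ≤ t * |E' k - E| := by
    intro k
    have h1 : (-(Complex.I * t * E)) = ((-(t * E) : ℝ) : ℂ) * Complex.I := by push_cast; ring
    have h2 : (-(Complex.I * t * (E' k))) = ((-(t * E' k) : ℝ) : ℂ) * Complex.I := by
      push_cast; ring
    have hle := exp_I_dist (-(t * E)) (-(t * E' k))
    have heq : |(-(t * E)) - (-(t * E' k))| = t * |E' k - E| := by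
      have : (-(t * E)) - (-(t * E' k)) = t * (E' k - E) := by ring
      rw [this, abs_mul, abs_of_nonneg ht]
    rw [hd]
    simp only [h1, h2]
    rw [← heq]
    exact hle
  have hd2 : ∀ k, d k ≤ 2 := by
    intro k
    have a1 : ‖Complex.exp (-(Complex.I * t * E))‖ = 1 := by
      have : (-(Complex.I * t * E)) = ((-(t * E) : ℝ) : ℂ) * Complex.I := by push_cast; ring
      rw [this, Complex.norm_exp_ofReal_mul_I]
    have a2 : ‖Complex.exp (-(Complex.I * t * (E' k)))‖ = 1 := by
      have : (-(Complex.I * t * (E' k))) = ((-(t * E' k) : ℝ) : ℂ) * Complex.I := by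
        push_cast; ring
      rw [this, Complex.norm_exp_ofReal_mul_I]
    calc d k ≤ ‖Complex.exp (-(Complex.I * t * E))‖ +
        ‖Complex.exp (-(Complex.I * t * (E' k)))‖ := norm_sub_le _ _
      _ = 2 := by rw [a1, a2]; norm_num
  have hdnn : ∀ k, 0 ≤ d k := fun k => norm_nonneg _
  have hsplit : ∑ k, ‖α k‖ ^ 2 * d k ^ 2
      = ∑ k ∈ G, ‖α k‖ ^ 2 * d k ^ 2 + ∑ k ∈ Gᶜ, ‖α k‖ ^ 2 * d k ^ 2 := by
    rw [Finset.sum_add_sum_compl]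
  have hgood : ∑ k ∈ G, ‖α k‖ ^ 2 * d k ^ 2 ≤ (t * δ) ^ 2 * ∑ k ∈ G, ‖α k‖ ^ 2 := by
    rw [Finset.mul_sum]
    apply Finset.sum_le_sum
    intro k hk
    rw [hG, Finset.mem_filter] at hk
    have hk' : d k ≤ t * δ := (hdist k).trans (by nlinarith [hk.2, abs_nonneg (E' k - E)])
    have : d k ^ 2 ≤ (t * δ) ^ 2 := by nlinarith [hdnn k]
    rw [mul_comm ((t*δ)^2)]
    exact mul_le_mul_of_nonneg_left this (by positivity)
  have hbad : ∑ k ∈ Gᶜ, ‖α k‖ ^ 2 * d k ^ 2 ≤ 4 * ∑ k ∈ Gᶜ, ‖α k‖ ^ 2 := by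
    rw [Finset.mul_sum]
    apply Finset.sum_le_sum
    intro k _
    have : d k ^ 2 ≤ 4 := by nlinarith [hd2 k, hdnn k]
    rw [mul_comm (4:ℝ)]
    exact mul_le_mul_of_nonneg_left this (by positivity)
  have hgsum : ∑ k ∈ G, ‖α k‖ ^ 2 ≤ 1 := by
    rw [← hnorm]
    exact Finset.sum_le_sum_of_subset_of_nonneg (Finset.subset_univ _)
      (fun k _ _ => by positivity)
  have hcsum : ∑ k ∈ Gᶜ, ‖α k‖ ^ 2 ≤ 1 - η := by
    have : ∑ k ∈ G, ‖α k‖ ^ 2 + ∑ k ∈ Gᶜ, ‖α k‖ ^ 2 = 1 := by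
      rw [Finset.sum_add_sum_compl, hnorm]
    linarith
  have hS : ∑ k, ‖α k‖ ^ 2 * d k ^ 2 ≤ (t * δ) ^ 2 + 4 * (1 - η) := by
    rw [hsplit]
    have h1 : (t * δ) ^ 2 * ∑ k ∈ G, ‖α k‖ ^ 2 ≤ (t * δ) ^ 2 := by
      nlinarith [sq_nonneg (t * δ)]
    have h2 : (4:ℝ) * ∑ k ∈ Gᶜ, ‖α k‖ ^ 2 ≤ 4 * (1 - η) := by linarith
    linarith [hgood, hbad]
  calc Real.sqrt (∑ k, ‖α k‖ ^ 2 * d k ^ 2)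
      ≤ Real.sqrt ((t * δ) ^ 2 + 4 * (1 - η)) := Real.sqrt_le_sqrt hS
    _ ≤ Real.sqrt ((t * δ) ^ 2) + Real.sqrt (4 * (1 - η)) :=
        sqrt_add_le' _ _ (by positivity) (by nlinarith)
    _ = t * δ + 2 * Real.sqrt (1 - η) := by
        rw [Real.sqrt_sq (by positivity), Real.sqrt_mul (by norm_num)]
        norm_num
end
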